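/- For every p in (1,2] and every real t with |t| ≤ π, one has −1 + cos(π/(2p))^{−p} |cos t|^p − cos(pt) tan(π/(2p)) ≥ 0. -/

import Mathlib

open Real

open Set Filter Topology

set_option maxHeartbeats 1000000

lemma verb_sin_sq (p : ℝ) (hp1 : 1 < p) (hp2 : p ≤ 2) :
    1 ≤ p * sin (π / (2 * p)) ^ 2 := by
  have hπ := pi_pos
  set c := π / (2 * p) with hc
  have hp0 : (0:ℝ) < p := by linarith
  have hc4 : π / 4 ≤ c := by
    rw [hc, div_le_div_iff₀ (by norm_num) (by positivity)]
    nlinarith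
  have hc2 : c ≤ π / 2 := by
    rw [hc, div_le_div_iff₀ (by positivity) (by norm_num)]
    nlinarith
  have h0 : (0:ℝ) ≤ 2 * c - π / 2 := by linarith
  have h1 : 2 * c - π / 2 ≤ π / 2 := by linarith
  have j := Real.mul_le_sin h0 h1
  have e : sin (2 * c - π / 2) = -cos (2 * c) := by
    rw [show 2 * c - π / 2 = -(π / 2 - 2 * c) by ring, sin_neg, sin_pi_div_two_sub]
  rw [e] at j
  have e2 : cos (2 * c) = 1 - 2 * sin c ^ 2 := by
    rw [cos_two_mul, sin_sq]; ring
  rw [e2] at j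
  have hcp : p * c = π / 2 := by
    rw [hc]; field_simp
  rw [div_mul_eq_mul_div, div_le_iff₀ hπ] at j
  have hc0 : 0 < c := by linarith
  nlinarith [sq_nonneg (sin c)]

lemma verb_caseA (p : ℝ) (hp1 : 1 < p) (hp2 : p ≤ 2) (t : ℝ)
    (ht0 : 0 ≤ t) (ht2 : t ≤ π / 2) :
    cos (π/(2*p)) ^ p + sin (π/(2*p)) * cos (π/(2*p)) ^ (p-1) * cos (p*t)
      ≤ cos t ^ p := by
  have hπ := pi_pos
  have hp0 : (0:ℝ) < p := by linarith
  set c := π / (2 * p) with hc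
  clear_value c
  have hc0 : 0 < c := by rw [hc]; positivity
  have hcl : c < π / 2 := by
    rw [hc, div_lt_div_iff₀ (by positivity) (by norm_num)]
    nlinarith
  have hpc : p * c = π / 2 := by rw [hc]; field_simp
  have hcosc : 0 < cos c := cos_pos_of_mem_Ioo ⟨by linarith, hcl⟩
  have hsinc : 0 < sin c := sin_pos_of_pos_of_lt_pi hc0 (by linarith)
  set A := cos c ^ p with hA_def
  set B := sin c * cos c ^ (p-1) with hB_def
  have hA : 0 < A := rpow_pos_of_pos hcosc p
  have hB : 0 < B := mul_pos hsinc (rpow_pos_of_pos hcosc _)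
  set f : ℝ → ℝ := fun s => cos s ^ p - B * cos (p*s) - A with hf_def
  set f' : ℝ → ℝ := fun s => p * (B * sin (p*s) - cos s ^ (p-1) * sin s) with hf'_def
  set w : ℝ → ℝ := fun s => f' s * cos (p*s) + p * (f s * sin (p*s)) with hw_def
  set q : ℝ → ℝ := fun s => p*(p-1) * cos s ^ (p-2) - p^2 * A with hq_def
  clear_value A B f f' w q
  have hcospos : ∀ x : ℝ, 0 ≤ x → x < π/2 → 0 < cos x := fun x h0 h1 =>
    cos_pos_of_mem_Ioo ⟨by linarith, h1⟩
  -- derivatives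
  have dlin : ∀ s : ℝ, HasDerivAt (fun u : ℝ => p * u) p s := fun s => by
    simpa using (hasDerivAt_id s).const_mul p
  have dC : ∀ s : ℝ, HasDerivAt (fun u => cos (p*u)) (-sin (p*s) * p) s := fun s => (dlin s).cos
  have dS : ∀ s : ℝ, HasDerivAt (fun u => sin (p*u)) (cos (p*s) * p) s := fun s => (dlin s).sin
  have df : ∀ s : ℝ, cos s ≠ 0 → HasDerivAt f (f' s) s := by
    intro s hs
    have d1 : HasDerivAt (fun u => cos u ^ p) (-sin s * p * cos s ^ (p-1)) s :=
      (Real.hasDerivAt_cos s).rpow_const (Or.inl hs)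
    have d2 := (d1.sub ((dC s).const_mul B)).sub_const A
    convert d2 using 1
    · rfl
    · rfl
    · exact hf_def
    simp only [hf'_def]
    ring
  have df' : ∀ s : ℝ, cos s ≠ 0 → HasDerivAt f'
      (p * (B * (cos (p*s) * p) - ((-sin s * (p-1) * cos s ^ (p-2)) * sin s + cos s ^ (p-1) * cos s))) s := by
    intro s hs
    have d1 : HasDerivAt (fun u => cos u ^ (p-1)) (-sin s * (p-1) * cos s ^ (p-1-1)) s :=
      (Real.hasDerivAt_cos s).rpow_const (Or.inl hs)
    rw [show p-1-1 = p-2 by ring] at d1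
    rw [hf'_def]
    exact (((dS s).const_mul B).sub (d1.mul (Real.hasDerivAt_sin s))).const_mul p
  have dw : ∀ s : ℝ, 0 < cos s → HasDerivAt w (q s * cos (p*s)) s := by
    intro s hs
    have hne := ne_of_gt hs
    have d := ((df' s hne).mul (dC s)).add (((df s hne).mul (dS s)).const_mul p)
    convert d using 1
    · rfl
    · rfl
    · exact hw_def
    have e1 : cos s ^ (p-1) = cos s ^ (p-2) * cos s := by
      rw [show p-1 = (p-2)+1 by ring, Real.rpow_add_one hne]
    have e2 : cos s ^ p = cos s ^ (p-2) * (cos s * cos s) := by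
      rw [show p = (p-2)+1+1 by ring, Real.rpow_add_one hne, Real.rpow_add_one hne]
      ring
    have e3 : sin s * sin s = 1 - cos s * cos s := by nlinarith [sin_sq_add_cos_sq s]
    simp only [hq_def, hf_def, hf'_def]
    rw [e1, e2]
    linear_combination (p*(1-p)*(cos s ^ (p-2))*(cos (p*s))) * e3
  -- mono helpers
  have wcont : ∀ a b : ℝ, 0 ≤ a → b < π/2 → ContinuousOn w (Icc a b) := by
    intro a b ha hb x hx
    exact ((dw x (hcospos x (ha.trans hx.1) (lt_of_le_of_lt hx.2 hb))).continuousAt).continuousWithinAt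
  have wmono : ∀ a b : ℝ, 0 ≤ a → b < π/2 → (∀ x, a < x → x < b → 0 ≤ q x * cos (p*x)) →
      MonotoneOn w (Icc a b) := by
    intro a b ha hb hqq
    apply monotoneOn_of_deriv_nonneg (convex_Icc a b) (wcont a b ha hb)
    · intro x hx
      rw [interior_Icc] at hx
      exact ((dw x (hcospos x (by linarith [hx.1]) (by linarith [hx.2]))).differentiableAt).differentiableWithinAt
    · intro x hx
      rw [interior_Icc] at hx
      rw [(dw x (hcospos x (by linarith [hx.1]) (by linarith [hx.2]))).deriv]
      exact hqq x hx.1 hx.2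
  have wanti : ∀ a b : ℝ, 0 ≤ a → b < π/2 → (∀ x, a < x → x < b → q x * cos (p*x) ≤ 0) →
      AntitoneOn w (Icc a b) := by
    intro a b ha hb hqq
    apply antitoneOn_of_deriv_nonpos (convex_Icc a b) (wcont a b ha hb)
    · intro x hx
      rw [interior_Icc] at hx
      exact ((dw x (hcospos x (by linarith [hx.1]) (by linarith [hx.2]))).differentiableAt).differentiableWithinAt
    · intro x hx
      rw [interior_Icc] at hx
      rw [(dw x (hcospos x (by linarith [hx.1]) (by linarith [hx.2]))).deriv]
      exact hqq x hx.1 hx.2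
  -- q facts
  have qmono : ∀ x y : ℝ, 0 ≤ x → x ≤ y → y < π/2 → q x ≤ q y := by
    intro x y h0 hxy h2
    have hcy : 0 < cos y := hcospos y (h0.trans hxy) h2
    have hle : cos y ≤ cos x := cos_le_cos_of_nonneg_of_le_pi h0 (by linarith) hxy
    have hr := Real.rpow_le_rpow_of_nonpos hcy hle (by linarith : p - 2 ≤ 0)
    simp only [hq_def]
    nlinarith [mul_le_mul_of_nonneg_left hr (by nlinarith : (0:ℝ) ≤ p*(p-1))]
  have hqc : 0 ≤ q c := by
    have hkey := verb_sin_sq p hp1 hp2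
    rw [← hc] at hkey
    have e2 : A = cos c ^ (p-2) * (cos c * cos c) := by
      rw [hA_def, show p = (p-2)+1+1 by ring, Real.rpow_add_one (ne_of_gt hcosc),
        Real.rpow_add_one (ne_of_gt hcosc)]
      ring
    have hX : (0:ℝ) < cos c ^ (p-2) := rpow_pos_of_pos hcosc _
    have hs2 : sin c ^ 2 = 1 - cos c * cos c := by nlinarith [sin_sq_add_cos_sq c]
    have key2 : 0 ≤ (p * sin c ^ 2 - 1) * (p * cos c ^ (p-2)) :=
      mul_nonneg (by linarith) (by positivity)
    have key3 : (p * sin c ^ 2 - 1) * (p * cos c ^ (p-2))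
        = p*(p-1)*cos c ^ (p-2) - p^2*(cos c ^ (p-2)*(cos c * cos c)) := by
      rw [hs2]; ring
    simp only [hq_def]
    rw [e2]
    linarith [key3 ▸ key2]
  -- values
  have hw0 : w 0 = 0 := by simp [hw_def, hf'_def]
  have hfc : f c = 0 := by
    simp only [hf_def, hpc, cos_pi_div_two, ← hA_def]
    ring
  have hwc : w c = 0 := by
    simp only [hw_def, hpc, cos_pi_div_two, sin_pi_div_two, hfc]
    simp
  -- w ≤ 0
  have hwle : ∀ s : ℝ, 0 ≤ s → s < π/2 → w s ≤ 0 := by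
    intro s hs0 hs2
    rcases le_or_gt s c with hsc | hcs
    · rcases le_or_gt (q s) 0 with hq | hq
      · have anti := wanti 0 s (le_refl 0) hs2 (by
          intro x hx1 hx2
          have hqx : q x ≤ 0 := le_trans (qmono x s (le_of_lt hx1) (le_of_lt hx2) hs2) hq
          have hb1 : 0 ≤ p * x := mul_nonneg hp0.le hx1.le
          have hb2 : p * x ≤ π/2 := by
            have := mul_le_mul_of_nonneg_left (by linarith : x ≤ c) hp0.le
            linarith [hpc]
          have hcx : 0 ≤ cos (p*x) := cos_nonneg_of_mem_Icc ⟨by linarith, hb2⟩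
          have hm := mul_nonneg (neg_nonneg.mpr hqx) hcx
          rw [neg_mul] at hm
          linarith)
        have h2 := anti (left_mem_Icc.mpr hs0) (right_mem_Icc.mpr hs0) hs0
        rw [hw0] at h2
        exact h2
      · have mono := wmono s c hs0 hcl (by
          intro x hx1 hx2
          have hqx : 0 ≤ q x := le_trans hq.le (qmono s x hs0 hx1.le (lt_trans hx2 hcl))
          have hb1 : 0 ≤ p * x := mul_nonneg hp0.le (hs0.trans hx1.le)
          have hb2 : p * x ≤ π/2 := by
            have := mul_le_mul_of_nonneg_left hx2.le hp0.le
            linarith [hpc]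
          exact mul_nonneg hqx (cos_nonneg_of_mem_Icc ⟨by linarith, hb2⟩))
        have h2 := mono (left_mem_Icc.mpr hsc) (right_mem_Icc.mpr hsc) hsc
        rw [hwc] at h2
        exact h2
    · have anti := wanti c s hc0.le hs2 (by
        intro x hx1 hx2
        have hqx : 0 ≤ q x := le_trans hqc (qmono c x hc0.le hx1.le (lt_trans hx2 hs2))
        have hb1 : π/2 ≤ p * x := by
          have := mul_le_mul_of_nonneg_left hx1.le hp0.le
          linarith [hpc]
        have hb2 : p * x ≤ 2 * (π/2) :=
          mul_le_mul hp2 (by linarith : x ≤ π/2) (by linarith) (by norm_num)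
        have hcx : cos (p*x) ≤ 0 := cos_nonpos_of_pi_div_two_le_of_le hb1 (by linarith)
        have hm := mul_nonneg hqx (neg_nonneg.mpr hcx)
        rw [mul_neg] at hm
        linarith)
      have h2 := anti (left_mem_Icc.mpr hcs.le) (right_mem_Icc.mpr hcs.le) hcs.le
      rw [hwc] at h2
      exact h2
  -- limit of quotient at c
  have dfc0 : HasDerivAt f 0 c := by
    have hd := df c (ne_of_gt hcosc)
    convert hd using 1
    simp only [hf'_def, hpc, sin_pi_div_two, hB_def]
    ring
  have dgc : HasDerivAt (fun u => cos (p*u)) (-p) c := by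
    have hd := dC c
    rw [hpc, sin_pi_div_two] at hd
    convert hd using 1
    ring
  have hlim : Tendsto (fun s => f s / cos (p*s)) (𝓝[≠] c) (𝓝 0) := by
    have t1 := hasDerivAt_iff_tendsto_slope.mp dfc0
    have t2 := hasDerivAt_iff_tendsto_slope.mp dgc
    have t3 := t1.div t2 (by simpa using ne_of_gt hp0 : (-p) ≠ 0)
    rw [zero_div] at t3
    refine Tendsto.congr' ?_ t3
    filter_upwards [self_mem_nhdsWithin] with s hs
    have hsc : s - c ≠ 0 := sub_ne_zero.mpr hs
    simp only [Pi.div_apply, slope_def_field, hfc, hpc, cos_pi_div_two, sub_zero]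
    rw [div_div_div_comm, div_self hsc, div_one]

  -- left side
  have hleft : ∀ s : ℝ, 0 ≤ s → s < c → 0 ≤ f s := by
    intro s hs0 hsc
    have hcps : ∀ x : ℝ, 0 ≤ x → x < c → 0 < cos (p*x) := by
      intro x h0 h1
      have hb1 : 0 ≤ p * x := mul_nonneg hp0.le h0
      have hb2 : p * x < π/2 := by
        have := mul_lt_mul_of_pos_left h1 hp0
        linarith [hpc]
      exact cos_pos_of_mem_Ioo ⟨by linarith, hb2⟩
    have hanti : AntitoneOn (fun x => f x / cos (p*x)) (Ico 0 c) := by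
      apply antitoneOn_of_deriv_nonpos (convex_Ico 0 c)
      · intro x hx
        have hcx : 0 < cos x := hcospos x hx.1 (lt_trans hx.2 hcl)
        exact ((df x (ne_of_gt hcx)).continuousAt.continuousWithinAt).div
          ((dC x).continuousAt.continuousWithinAt) (ne_of_gt (hcps x hx.1 hx.2))
      · intro x hx
        rw [interior_Ico] at hx
        have hcx : 0 < cos x := hcospos x hx.1.le (lt_trans hx.2 hcl)
        exact (((df x (ne_of_gt hcx)).div (dC x) (ne_of_gt (hcps x hx.1.le hx.2))).differentiableAt).differentiableWithinAt
      · intro x hx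
        rw [interior_Ico] at hx
        have hcx : 0 < cos x := hcospos x hx.1.le (lt_trans hx.2 hcl)
        have hdd := (df x (ne_of_gt hcx)).div (dC x) (ne_of_gt (hcps x hx.1.le hx.2))
        rw [show (fun x => f x / cos (p*x)) = (f / fun u => cos (p*u)) from rfl, hdd.deriv]
        have hnum : f' x * cos (p*x) - f x * (-sin (p*x) * p) = w x := by
          simp only [hw_def]; ring
        rw [hnum]
        exact div_nonpos_iff.mpr (Or.inr ⟨hwle x hx.1.le (lt_trans hx.2 hcl), sq_nonneg _⟩)
    have hlim2 : Tendsto (fun x => f x / cos (p*x)) (𝓝[<] c) (𝓝 0) :=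
      hlim.mono_left (nhdsWithin_mono c (fun x hx => ne_of_lt hx))
    have hev : ∀ᶠ x in 𝓝[<] c, f x / cos (p*x) ≤ f s / cos (p*s) := by
      filter_upwards [Ioo_mem_nhdsLT_of_mem (⟨hsc, le_refl c⟩ : c ∈ Ioc s c)] with x hx
      exact hanti ⟨hs0, hsc⟩ ⟨hs0.trans hx.1.le, hx.2⟩ hx.1.le
    have h0φ : 0 ≤ f s / cos (p*s) := le_of_tendsto hlim2 hev
    have hcs2 : 0 < cos (p*s) := hcps s hs0 hsc
    have hmm := mul_nonneg h0φ hcs2.le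
    rwa [div_mul_cancel₀ _ (ne_of_gt hcs2)] at hmm
  -- right side
  have hright : ∀ s : ℝ, c < s → s ≤ π/2 → 0 ≤ f s := by
    intro s hcs hs2
    have hcpn : ∀ x : ℝ, c < x → x ≤ π/2 → cos (p*x) < 0 := by
      intro x h1 h2
      have hb1 : π/2 < p * x := by
        have := mul_lt_mul_of_pos_left h1 hp0
        linarith [hpc]
      have hb2 : p * x ≤ 2 * (π/2) := mul_le_mul hp2 h2 (by linarith) (by norm_num)
      exact cos_neg_of_pi_div_two_lt_of_lt hb1 (by linarith)
    have hcontf : Continuous f := by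
      have hcp : Continuous fun u : ℝ => cos u ^ p := by
        rw [continuous_iff_continuousAt]
        intro x
        exact (Real.continuousAt_rpow_const (cos x) p (Or.inr (by linarith))).comp
          (Real.continuous_cos.continuousAt)
      rw [hf_def]
      exact (hcp.sub (continuous_const.mul (Real.continuous_cos.comp (continuous_const.mul continuous_id)))).sub continuous_const
    have hanti : AntitoneOn (fun x => f x / cos (p*x)) (Ioc c (π/2)) := by
      apply antitoneOn_of_deriv_nonpos (convex_Ioc c (π/2))
      · intro x hx
        exact (hcontf.continuousAt.continuousWithinAt).div
          ((dC x).continuousAt.continuousWithinAt) (ne_of_lt (hcpn x hx.1 hx.2))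
      · intro x hx
        rw [interior_Ioc] at hx
        have hcx : 0 < cos x := hcospos x (hc0.le.trans hx.1.le) hx.2
        exact (((df x (ne_of_gt hcx)).div (dC x) (ne_of_lt (hcpn x hx.1 hx.2.le))).differentiableAt).differentiableWithinAt
      · intro x hx
        rw [interior_Ioc] at hx
        have hcx : 0 < cos x := hcospos x (hc0.le.trans hx.1.le) hx.2
        have hdd := (df x (ne_of_gt hcx)).div (dC x) (ne_of_lt (hcpn x hx.1 hx.2.le))
        rw [show (fun x => f x / cos (p*x)) = (f / fun u => cos (p*u)) from rfl, hdd.deriv]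
        have hnum : f' x * cos (p*x) - f x * (-sin (p*x) * p) = w x := by
          simp only [hw_def]; ring
        rw [hnum]
        exact div_nonpos_iff.mpr (Or.inr ⟨hwle x (hc0.le.trans hx.1.le) hx.2, sq_nonneg _⟩)
    have hlim2 : Tendsto (fun x => f x / cos (p*x)) (𝓝[>] c) (𝓝 0) :=
      hlim.mono_left (nhdsWithin_mono c (fun x hx => ne_of_gt hx))
    have hev : ∀ᶠ x in 𝓝[>] c, f s / cos (p*s) ≤ f x / cos (p*x) := by
      filter_upwards [Ioo_mem_nhdsGT_of_mem (⟨le_refl c, hcs⟩ : c ∈ Ico c s)] with x hx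
      exact hanti ⟨hx.1, hx.2.le.trans hs2⟩ ⟨hcs, hs2⟩ hx.2.le
    have h0φ : f s / cos (p*s) ≤ 0 := ge_of_tendsto hlim2 hev
    have hcs2 : cos (p*s) < 0 := hcpn s hcs hs2
    have hmm := mul_nonneg (neg_nonneg.mpr h0φ) (neg_nonneg.mpr hcs2.le)
    rw [neg_mul_neg, div_mul_cancel₀ _ (ne_of_lt hcs2)] at hmm
    exact hmm
  -- conclude
  have hfinal : 0 ≤ f t := by
    rcases lt_trichotomy t c with h1 | h1 | h1
    · exact hleft t ht0 h1
    · rw [h1]; exact hfc.ge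
    · exact hright t h1 ht2
  simp only [hf_def] at hfinal
  linarith

lemma verb_full (p : ℝ) (hp1 : 1 < p) (hp2 : p ≤ 2) (t : ℝ)
    (ht0 : 0 ≤ t) (ht2 : t ≤ π) :
    cos (π/(2*p)) ^ p + sin (π/(2*p)) * cos (π/(2*p)) ^ (p-1) * cos (p*t)
      ≤ |cos t| ^ p := by
  have hπ := pi_pos
  have hp0 : (0:ℝ) < p := by linarith
  have hB : 0 < sin (π/(2*p)) * cos (π/(2*p)) ^ (p-1) := by
    have h1 : 0 < π/(2*p) := by positivity
    have h2 : π/(2*p) < π/2 := by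
      rw [div_lt_div_iff₀ (by positivity) (by norm_num)]; nlinarith
    exact mul_pos (sin_pos_of_pos_of_lt_pi h1 (by linarith))
      (rpow_pos_of_pos (cos_pos_of_mem_Ioo ⟨by linarith, h2⟩) _)
  rcases le_or_gt t (π/2) with h | h
  · rw [abs_of_nonneg (cos_nonneg_of_mem_Icc ⟨by linarith, h⟩)]
    exact verb_caseA p hp1 hp2 t ht0 h
  · set s := π - t with hs
    have hs0 : 0 ≤ s := by rw [hs]; linarith
    have hs2 : s ≤ π/2 := by rw [hs]; linarith
    have hcs : |cos t| = cos s := by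
      rw [abs_of_nonpos (cos_nonpos_of_pi_div_two_le_of_le h.le (by linarith)), hs, cos_pi_sub]
    have hkey := verb_caseA p hp1 hp2 s hs0 hs2
    have hcc : cos (p*t) ≤ cos (p*s) := by
      have ha0 : 0 ≤ p * s := mul_nonneg hp0.le hs0
      have hab : p * s ≤ p * t := mul_le_mul_of_nonneg_left (by rw [hs]; linarith) hp0.le
      have haπ : p * s ≤ π := by nlinarith
      rcases le_or_gt (p*t) π with hb | hb
      · exact cos_le_cos_of_nonneg_of_le_pi ha0 hb hab
      · have h2π : p * t ≤ 2 * π := by nlinarith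
        have : cos (p*t) = cos (2*π - p*t) := (cos_two_pi_sub (p*t)).symm
        rw [this]
        apply cos_le_cos_of_nonneg_of_le_pi ha0 (by linarith)
        rw [hs]; nlinarith
      -- goal: p*s ≤ 2*π - p*t : 2π - pπ + ps ≥ ps ⟺ p ≤ 2
    rw [hcs]
    calc cos (π/(2*p)) ^ p + sin (π/(2*p)) * cos (π/(2*p)) ^ (p-1) * cos (p*t)
        ≤ cos (π/(2*p)) ^ p + sin (π/(2*p)) * cos (π/(2*p)) ^ (p-1) * cos (p*s) := by nlinarith
      _ ≤ cos s ^ p := hkey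

/-- Verbitsky's trigonometric inequality. -/
theorem verbitsky_inequality (p : ℝ) (hp1 : 1 < p) (hp2 : p ≤ 2)
    (t : ℝ) (ht : |t| ≤ π) :
    -1 + Real.cos (π / (2 * p)) ^ (-p) * |Real.cos t| ^ p
      - Real.cos (p * t) * Real.tan (π / (2 * p)) ≥ 0 := by
  have hπ := pi_pos
  have hp0 : (0:ℝ) < p := by linarith
  have h1 : 0 < π/(2*p) := by positivity
  have h2 : π/(2*p) < π/2 := by
    rw [div_lt_div_iff₀ (by positivity) (by norm_num)]; nlinarith
  have hcosc : 0 < cos (π/(2*p)) := cos_pos_of_mem_Ioo ⟨by linarith, h2⟩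
  have hA : 0 < cos (π/(2*p)) ^ p := rpow_pos_of_pos hcosc p
  -- reduce to |t|
  set u := |t| with hu
  have hu0 : 0 ≤ u := abs_nonneg t
  have hct : |cos t| = |cos u| := by rw [hu, cos_abs]
  have hcpt : cos (p * t) = cos (p * u) := by
    rcases abs_cases t with ⟨h, _⟩ | ⟨h, _⟩
    · rw [hu, h]
    · rw [hu, h, mul_neg, cos_neg]
  rw [hct, hcpt]
  have hkey := verb_full p hp1 hp2 u hu0 ht
  -- algebra
  have hsplit : cos (π/(2*p)) ^ p = cos (π/(2*p)) ^ (p-1) * cos (π/(2*p)) := by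
    rw [← Real.rpow_add_one (ne_of_gt hcosc) (p-1)]
    norm_num
  have htan : tan (π/(2*p)) = sin (π/(2*p)) * cos (π/(2*p)) ^ (p-1) / cos (π/(2*p)) ^ p := by
    rw [tan_eq_sin_div_cos, hsplit]
    rw [div_eq_div_iff (ne_of_gt hcosc) (by positivity)]
    ring
  have hneg : cos (π/(2*p)) ^ (-p) = (cos (π/(2*p)) ^ p)⁻¹ := by
    rw [Real.rpow_neg hcosc.le]
  rw [htan, hneg]
  rw [ge_iff_le, ← sub_nonneg]
  have heq : -1 + (cos (π/(2*p)) ^ p)⁻¹ * |cos u| ^ p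
      - cos (p*u) * (sin (π/(2*p)) * cos (π/(2*p)) ^ (p-1) / cos (π/(2*p)) ^ p) - 0
      = (|cos u| ^ p - (cos (π/(2*p)) ^ p + sin (π/(2*p)) * cos (π/(2*p)) ^ (p-1) * cos (p*u)))
        / cos (π/(2*p)) ^ p := by
    field_simp
    ring
  rw [heq]
  exact div_nonneg (by linarith) hA.le
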